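/- Let γ₁, γ₂ > 0 with γ₁ ≠ γ₂ and G = γ₂/γ₁ + γ₁/γ₂. Then the polynomial P(c) = c⁴ + 2G c³ + (10 - G²) c² + (G³ - 2G) c + 4G² - 15 is strictly increasing on [-1, 1], satisfies P(-1) < 0 and P(1) > 0, and hence has exactly one root in [-1, 1]. -/
import Mathlib


open Real

theorem quartic_strictly_increasing_unique_root
    (γ₁ γ₂ : ℝ) (h₁ : 0 < γ₁) (h₂ : 0 < γ₂) (hne : γ₁ ≠ γ₂)
    (G : ℝ) (hG : G = γ₂ / γ₁ + γ₁ / γ₂)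
    (P : ℝ → ℝ)
    (hP : ∀ c, P c = c ^ 4 + 2 * G * c ^ 3 + (10 - G ^ 2) * c ^ 2
      + (G ^ 3 - 2 * G) * c + 4 * G ^ 2 - 15) :
    StrictMonoOn P (Set.Icc (-1) 1) ∧ P (-1) < 0 ∧ P 1 > 0 ∧
    (∃! c, c ∈ Set.Icc (-1 : ℝ) 1 ∧ P c = 0) := by
  have hPe : P = fun c => c ^ 4 + 2 * G * c ^ 3 + (10 - G ^ 2) * c ^ 2
      + (G ^ 3 - 2 * G) * c + 4 * G ^ 2 - 15 := funext hP
  have hsq : (0:ℝ) < (γ₁ - γ₂) ^ 2 := by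
    have h := sub_ne_zero.mpr hne
    positivity
  have hG2 : 2 < G := by
    rw [hG, div_add_div _ _ (ne_of_gt h₁) (ne_of_gt h₂), lt_div_iff₀ (mul_pos h₁ h₂)]
    nlinarith
  have hderiv : ∀ c : ℝ, HasDerivAt P
      (4 * c ^ 3 + 6 * G * c ^ 2 + 2 * (10 - G ^ 2) * c + (G ^ 3 - 2 * G)) c := by
    intro c
    rw [hPe]
    have h1 := ((((hasDerivAt_pow 4 c).add
        ((hasDerivAt_pow 3 c).const_mul (2 * G))).add
        ((hasDerivAt_pow 2 c).const_mul (10 - G ^ 2))).add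
        ((hasDerivAt_id c).const_mul (G ^ 3 - 2 * G))).add_const (4 * G ^ 2) |>.sub_const 15
    exact h1.congr_deriv (by push_cast; ring)
  have hdpos : ∀ x ∈ Set.Ioo (-1:ℝ) 1,
      0 < 4 * x ^ 3 + 6 * G * x ^ 2 + 2 * (10 - G ^ 2) * x + (G ^ 3 - 2 * G) := by
    intro x hx
    obtain ⟨hx1, hx2⟩ := hx
    have h0 : (0:ℝ) ≤ x + 1 := by linarith
    have hcube : (0:ℝ) ≤ (x + 1) ^ 2 * (x + 1) := mul_nonneg (sq_nonneg _) h0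
    have hA : (0:ℝ) ≤ (G - 2) * (6 * x - G - 2) ^ 2 :=
      mul_nonneg (by linarith) (sq_nonneg _)
    have hB : (0:ℝ) < (G - 2) * (5 * G ^ 2 + 8 * G + 8) :=
      mul_pos (by linarith) (by nlinarith)
    nlinarith [hcube, hA, hB]
  have hcont : ContinuousOn P (Set.Icc (-1:ℝ) 1) := by
    rw [hPe]; fun_prop
  have hmono : StrictMonoOn P (Set.Icc (-1:ℝ) 1) := by
    apply strictMonoOn_of_deriv_pos (convex_Icc _ _) hcont
    intro x hx
    rw [interior_Icc] at hx
    rw [(hderiv x).deriv]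
    exact hdpos x hx
  have hPneg : P (-1) < 0 := by
    rw [hP]
    nlinarith [sq_nonneg (G - 2), hG2]
  have hPpos : P 1 > 0 := by
    rw [hP]
    nlinarith [sq_nonneg (G + 2), hG2]
  refine ⟨hmono, hPneg, hPpos, ?_⟩
  have hiv := intermediate_value_Icc (by norm_num : (-1:ℝ) ≤ 1) hcont
  have h0 : (0:ℝ) ∈ Set.Icc (P (-1)) (P 1) := ⟨le_of_lt hPneg, le_of_lt hPpos⟩
  obtain ⟨c, hc, hPc⟩ := hiv h0
  refine ⟨c, ⟨hc, hPc⟩, ?_⟩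
  rintro y ⟨hy, hPy⟩
  exact hmono.injOn hy hc (by rw [hPy, hPc])
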